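/- Let ε be a real random variable with Lebesgue density f satisfying |f(a) − f(b)| ≤ l_f |a − b| for all a, b ∈ ℝ, and with P(ε ≤ 0) = τ for some τ ∈ (0,1). Let K : ℝ → [0,∞) be a measurable symmetric kernel (K(−w) = K(w)) with ∫K(w)dw = 1 and ∫w²K(w)dw < ∞, let K̄(u) = ∫_{−∞}^u K(v)dv, and let h > 0. Then the smoothing bias satisfies |E[K̄(−ε/h)] − τ| ≤ (l_f h²/2)·∫w²K(w)dw. -/

import Mathlib

open MeasureTheory

/-- The integrated kernel `K̄(u) = ∫_{−∞}^u K(v) dv`. -/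
noncomputable def integratedKernel (K : ℝ → ℝ) (u : ℝ) : ℝ :=
  ∫ v in Set.Iic u, K v

/-- smoothing bias. Let `ε` have Lebesgue density `f` which is
`l_f`-Lipschitz and satisfies `P(ε ≤ 0) = τ`. For a symmetric kernel `K` with unit
mass and finite second moment and any `h > 0`, the smoothing bias satisfies
`|E[K̄(−ε/h)] − τ| ≤ (l_f h²/2) ∫ w² K(w) dw`. -/
theorem smoothing_bias_bound
    (τ h lf : ℝ) (hτ0 : 0 < τ) (hτ1 : τ < 1) (hh : 0 < h) (hlf : 0 ≤ lf)
    (f : ℝ → ℝ) (hf_meas : Measurable f) (hf_nonneg : ∀ x, 0 ≤ f x)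
    (hf_int : Integrable f) (hf_one : ∫ x, f x = 1)
    (hf_lip : ∀ a b : ℝ, |f a - f b| ≤ lf * |a - b|)
    (hquant : ∫ x in Set.Iic (0 : ℝ), f x = τ)
    (K : ℝ → ℝ) (hK_meas : Measurable K) (hK_nonneg : ∀ w, 0 ≤ K w)
    (hK_symm : ∀ w, K (-w) = K w)
    (hK_int : Integrable K) (hK_one : ∫ w, K w = 1)
    (hK_mom2 : Integrable (fun w => w ^ 2 * K w)) :
    |(∫ x, integratedKernel K (-x / h) * f x) - τ| ≤
      lf * h ^ 2 / 2 * ∫ w, w ^ 2 * K w := by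
  -- The CDF of ε
  set F : ℝ → ℝ := fun u => ∫ x in Set.Iic u, f x with hFdef
  have hFmono : Monotone F := by
    intro a b hab
    exact setIntegral_mono_set hf_int.integrableOn
      (Filter.Eventually.of_forall hf_nonneg)
      ((Set.Iic_subset_Iic.2 hab).eventuallyLE)
  have hFmeas : Measurable F := hFmono.measurable
  have hF_nonneg : ∀ u, 0 ≤ F u := fun u =>
    setIntegral_nonneg measurableSet_Iic fun x _ => hf_nonneg x
  have hF_le_one : ∀ u, F u ≤ 1 := fun u => by
    rw [← hf_one]
    exact setIntegral_le_integral hf_int (Filter.Eventually.of_forall hf_nonneg)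
  -- Step 1: Fubini
  have hS : MeasurableSet {p : ℝ × ℝ | p.1 ≤ -(h * p.2)} :=
    measurableSet_le measurable_fst ((measurable_snd.const_mul h).neg)
  set G : ℝ × ℝ → ℝ := {p : ℝ × ℝ | p.1 ≤ -(h * p.2)}.indicator
      (fun p : ℝ × ℝ => f p.1 * K p.2) with hGdef
  have hG_int : Integrable G (volume.prod volume) :=
    (hf_int.mul_prod hK_int).indicator hS
  have h1 : ∀ x : ℝ, integratedKernel K (-x / h) * f x = ∫ v, G (x, v) := by
    intro x
    have hptw : ∀ v : ℝ, G (x, v) = (Set.Iic (-x / h)).indicator (fun w => f x * K w) v := by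
      intro v
      have hiff : (x ≤ -(h * v)) ↔ v ≤ -x / h := by
        rw [le_div_iff₀ hh]; constructor <;> intro hyp <;> nlinarith
      by_cases hv : x ≤ -(h * v)
      · rw [hGdef,
          Set.indicator_of_mem (show (x, v) ∈ {p : ℝ × ℝ | p.1 ≤ -(h * p.2)} from hv),
          Set.indicator_of_mem (show v ∈ Set.Iic (-x / h) from hiff.1 hv)]
      · rw [hGdef,
          Set.indicator_of_notMem (show (x, v) ∉ {p : ℝ × ℝ | p.1 ≤ -(h * p.2)} from hv),
          Set.indicator_of_notMem (show v ∉ Set.Iic (-x / h) from fun hm => hv (hiff.2 hm))]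
    simp_rw [hptw]
    rw [integral_indicator measurableSet_Iic, integral_const_mul, integratedKernel]
    ring
  have h2 : ∀ v : ℝ, (∫ x, G (x, v)) = F (-(h * v)) * K v := by
    intro v
    have hptw : ∀ x : ℝ, G (x, v) = (Set.Iic (-(h * v))).indicator (fun y => f y * K v) x := by
      intro x
      by_cases hv : x ≤ -(h * v)
      · rw [hGdef,
          Set.indicator_of_mem (show (x, v) ∈ {p : ℝ × ℝ | p.1 ≤ -(h * p.2)} from hv),
          Set.indicator_of_mem (show x ∈ Set.Iic (-(h * v)) from hv)]
      · rw [hGdef,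
          Set.indicator_of_notMem (show (x, v) ∉ {p : ℝ × ℝ | p.1 ≤ -(h * p.2)} from hv),
          Set.indicator_of_notMem (show x ∉ Set.Iic (-(h * v)) from hv)]
    simp_rw [hptw]
    rw [integral_indicator measurableSet_Iic, integral_mul_const]
  have hswap : (∫ x, integratedKernel K (-x / h) * f x) = ∫ v, F (-(h * v)) * K v := by
    simp_rw [h1]
    rw [show (∫ x, ∫ v, G (x, v)) = ∫ v, ∫ x, G (x, v) from
      integral_integral_swap (f := fun x v => G (x, v)) hG_int]
    simp_rw [h2]
  -- Step 2: center at τ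
  set g : ℝ → ℝ := fun v => F (-(h * v)) - τ with hgdef
  have hg_meas : Measurable g :=
    (hFmeas.comp ((measurable_id.const_mul h).neg)).sub measurable_const
  have hg_bdd : ∀ v, ‖g v‖ ≤ 1 := by
    intro v
    rw [Real.norm_eq_abs, abs_le]
    constructor
    · have := hF_nonneg (-(h * v)); simp only [hgdef]; linarith
    · have := hF_le_one (-(h * v)); simp only [hgdef]; linarith
  have hgneg_bdd : ∀ v, ‖g (-v)‖ ≤ 1 := fun v => hg_bdd (-v)
  have hI1 : Integrable (fun v => g v * K v) :=
    hK_int.bdd_mul hg_meas.aestronglyMeasurable (Filter.Eventually.of_forall hg_bdd)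
  have hI2 : Integrable (fun v => g (-v) * K v) :=
    hK_int.bdd_mul (hg_meas.comp measurable_neg).aestronglyMeasurable (Filter.Eventually.of_forall hgneg_bdd)
  have hEτ : (∫ v, F (-(h * v)) * K v) - τ = ∫ v, g v * K v := by
    have e1 : (fun v => g v * K v) = fun v => F (-(h * v)) * K v - τ * K v := by
      funext v; simp only [hgdef]; ring
    have hIF : Integrable (fun v => F (-(h * v)) * K v) :=
      hK_int.bdd_mul ((hFmeas.comp ((measurable_id.const_mul h).neg)).aestronglyMeasurable)
        (Filter.Eventually.of_forall fun v => by
          rw [Real.norm_eq_abs, abs_of_nonneg (hF_nonneg _)]; exact hF_le_one _)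
    rw [e1, integral_sub hIF (hK_int.const_mul τ), integral_const_mul, hK_one, mul_one]
  -- Step 3: symmetrize
  have hsymm : (∫ v, g v * K v) = ∫ v, g (-v) * K v := by
    have : (∫ v, g v * K v) = ∫ v, g (-(-v)) * K (-v) := by
      simp_rw [neg_neg, hK_symm]
    rw [this, integral_neg_eq_self (fun v => g (-v) * K v) volume]
  have hhalf : (∫ v, g v * K v) = (1 / 2) * ∫ v, (g v + g (-v)) * K v := by
    have e : (fun v => (g v + g (-v)) * K v) = fun v => g v * K v + g (-v) * K v := by
      funext v; ring
    rw [e, integral_add hI1 hI2, ← hsymm]; ring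
  -- Step 4: pointwise bound
  have hptw : ∀ v : ℝ, |g v + g (-v)| ≤ lf * h ^ 2 * v ^ 2 := by
    intro v
    set c := h * v with hcdef
    have hIneg : Integrable (fun x => f (-x)) := hf_int.comp_neg
    have hii : IntervalIntegrable f volume 0 c := hf_int.intervalIntegrable
    have hiin : IntervalIntegrable (fun x => f (-x)) volume 0 c := hIneg.intervalIntegrable
    have hc1 : g v = ∫ x in (0:ℝ)..(-c), f x := by
      simp only [hgdef, hcdef]
      rw [← hquant]
      exact intervalIntegral.integral_Iic_sub_Iic hf_int.integrableOn hf_int.integrableOn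
    have hc2 : g (-v) = ∫ x in (0:ℝ)..c, f x := by
      simp only [hgdef]
      have : -(h * -v) = c := by rw [hcdef]; ring
      rw [this, ← hquant]
      exact intervalIntegral.integral_Iic_sub_Iic hf_int.integrableOn hf_int.integrableOn
    have hneg : (∫ x in (0:ℝ)..(-c), f x) = -∫ x in (0:ℝ)..c, f (-x) := by
      rw [intervalIntegral.integral_comp_neg fun x => f x, neg_zero,
        intervalIntegral.integral_symm]
    have hsum : g v + g (-v) = ∫ x in (0:ℝ)..c, (f x - f (-x)) := by
      rw [hc1, hc2, hneg, intervalIntegral.integral_sub hii hiin]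
      ring
    have habs_ii : IntervalIntegrable (fun x => |f x - f (-x)|) volume 0 c :=
      (hii.sub hiin).abs
    have hc2eq : lf * c ^ 2 = lf * h ^ 2 * v ^ 2 := by rw [hcdef]; ring
    rw [hsum, ← hc2eq]
    rcases le_total 0 c with hcc | hcc
    · have hb1 : |∫ x in (0:ℝ)..c, (f x - f (-x))| ≤ ∫ x in (0:ℝ)..c, |f x - f (-x)| :=
        intervalIntegral.abs_integral_le_integral_abs hcc
      have hb2 : (∫ x in (0:ℝ)..c, |f x - f (-x)|) ≤ ∫ x in (0:ℝ)..c, lf * (2 * x) := by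
        apply intervalIntegral.integral_mono_on hcc habs_ii
          ((continuous_const.mul (continuous_const.mul continuous_id)).intervalIntegrable 0 c)
        intro x hx
        have hx0 : 0 ≤ x := hx.1
        have := hf_lip x (-x)
        have hax : |x - -x| = 2 * x := by rw [sub_neg_eq_add, abs_of_nonneg (by linarith)]; ring
        rw [hax] at this
        exact this
      have hb3 : (∫ x in (0:ℝ)..c, lf * (2 * x)) = lf * c ^ 2 := by
        rw [intervalIntegral.integral_const_mul, intervalIntegral.integral_const_mul,
          integral_id]
        ring
      calc |∫ x in (0:ℝ)..c, (f x - f (-x))| ≤ ∫ x in (0:ℝ)..c, |f x - f (-x)| := hb1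
        _ ≤ ∫ x in (0:ℝ)..c, lf * (2 * x) := hb2
        _ = lf * c ^ 2 := hb3
    · have hsymm2 : (∫ x in (0:ℝ)..c, (f x - f (-x))) = -∫ x in c..(0:ℝ), (f x - f (-x)) :=
        intervalIntegral.integral_symm c 0
      have hb1 : |∫ x in c..(0:ℝ), (f x - f (-x))| ≤ ∫ x in c..(0:ℝ), |f x - f (-x)| :=
        intervalIntegral.abs_integral_le_integral_abs hcc
      have hb2 : (∫ x in c..(0:ℝ), |f x - f (-x)|) ≤ ∫ x in c..(0:ℝ), lf * (2 * (-x)) := by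
        apply intervalIntegral.integral_mono_on hcc ((hii.symm).sub (hiin.symm)).abs
          ((continuous_const.mul (continuous_const.mul continuous_neg)).intervalIntegrable c 0)
        intro x hx
        have hx0 : x ≤ 0 := hx.2
        have := hf_lip x (-x)
        have hax : |x - -x| = 2 * (-x) := by
          rw [sub_neg_eq_add, abs_of_nonpos (by linarith)]; ring
        rw [hax] at this
        exact this
      have hb3 : (∫ x in c..(0:ℝ), lf * (2 * (-x))) = lf * c ^ 2 := by
        rw [intervalIntegral.integral_const_mul, intervalIntegral.integral_const_mul,
          intervalIntegral.integral_neg, integral_id]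
        ring
      rw [hsymm2, abs_neg]
      calc |∫ x in c..(0:ℝ), (f x - f (-x))| ≤ ∫ x in c..(0:ℝ), |f x - f (-x)| := hb1
        _ ≤ ∫ x in c..(0:ℝ), lf * (2 * (-x)) := hb2
        _ = lf * c ^ 2 := hb3
  -- Step 5: conclude
  have hbound : |∫ v, (g v + g (-v)) * K v| ≤ lf * h ^ 2 * ∫ w, w ^ 2 * K w := by
    have hn : |∫ v, (g v + g (-v)) * K v| ≤ ∫ v, |(g v + g (-v)) * K v| := by
      have := norm_integral_le_integral_norm (fun v => (g v + g (-v)) * K v) (μ := volume)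
      simpa only [Real.norm_eq_abs] using this
    have hm : (∫ v, |(g v + g (-v)) * K v|) ≤ ∫ v, lf * h ^ 2 * (v ^ 2 * K v) := by
      apply integral_mono_of_nonneg (Filter.Eventually.of_forall fun v => abs_nonneg _)
        (hK_mom2.const_mul (lf * h ^ 2))
      apply Filter.Eventually.of_forall
      intro v
      show |(g v + g (-v)) * K v| ≤ lf * h ^ 2 * (v ^ 2 * K v)
      rw [abs_mul, abs_of_nonneg (hK_nonneg v)]
      calc |g v + g (-v)| * K v ≤ lf * h ^ 2 * v ^ 2 * K v :=
            mul_le_mul_of_nonneg_right (hptw v) (hK_nonneg v)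
        _ = lf * h ^ 2 * (v ^ 2 * K v) := by ring
    have he : (∫ v, lf * h ^ 2 * (v ^ 2 * K v)) = lf * h ^ 2 * ∫ w, w ^ 2 * K w :=
      integral_const_mul (lf * h ^ 2) _
    calc |∫ v, (g v + g (-v)) * K v| ≤ ∫ v, |(g v + g (-v)) * K v| := hn
      _ ≤ ∫ v, lf * h ^ 2 * (v ^ 2 * K v) := hm
      _ = lf * h ^ 2 * ∫ w, w ^ 2 * K w := he
  rw [hswap, hEτ, hhalf, abs_mul, abs_of_nonneg (by norm_num : (0:ℝ) ≤ 1/2)]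
  calc 1 / 2 * |∫ v, (g v + g (-v)) * K v| ≤ 1 / 2 * (lf * h ^ 2 * ∫ w, w ^ 2 * K w) := by
        linarith [hbound]
    _ = lf * h ^ 2 / 2 * ∫ w, w ^ 2 * K w := by ring
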